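/- Let a, b, α, β, k > 0 and D_min ≥ 0, define D(σ, N) = D_min + (a/σ)^α + (b/N)^β and C(σ, N) = k·σ·N·D(σ, N). Suppose α < 1 or β < 1, and let D₀ > D_min. Then the unique minimizer of C(σ, N) subject to D(σ, N) ≤ D₀ over σ, N > 0 is σ* = a·((1 + α/β)/(D₀ − D_min))^{1/α}, N* = b·((1 + β/α)/(D₀ − D_min))^{1/β}. -/

import Mathlib

set_option maxHeartbeats 1000000


open Real

lemma amgm_strict (u v p q : ℝ) (hu : 0 < u) (hv : 0 < v) (hp : 0 < p) (hq : 0 < q)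
    (hpq : p + q = 1) (huv : u ≠ v) : u ^ p * v ^ q < p * u + q * v := by
  have h := strictConcaveOn_log_Ioi.2 (Set.mem_Ioi.2 hu) (Set.mem_Ioi.2 hv) huv hp hq hpq
  simp only [smul_eq_mul] at h
  have heq : u ^ p * v ^ q = Real.exp (p * Real.log u + q * Real.log v) := by
    rw [Real.exp_add, Real.rpow_def_of_pos hu, Real.rpow_def_of_pos hv]
    ring_nf
  rw [heq]
  calc Real.exp (p * Real.log u + q * Real.log v) < Real.exp (Real.log (p * u + q * v)) :=
        Real.exp_lt_exp.2 h
    _ = p * u + q * v := Real.exp_log (by positivity)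

theorem stmt_1 (a b α β k Dmin D₀ : ℝ)
    (ha : 0 < a) (hb : 0 < b) (hα : 0 < α) (hβ : 0 < β) (hk : 0 < k)
    (hDmin : 0 ≤ Dmin) (hαβ : α < 1 ∨ β < 1) (hD₀ : Dmin < D₀)
    (D : ℝ → ℝ → ℝ) (hD : ∀ σ N, D σ N = Dmin + (a / σ) ^ α + (b / N) ^ β)
    (C : ℝ → ℝ → ℝ) (hC : ∀ σ N, C σ N = k * σ * N * D σ N) :
    let σs := a * ((1 + α / β) / (D₀ - Dmin)) ^ (1 / α)
    let Ns := b * ((1 + β / α) / (D₀ - Dmin)) ^ (1 / β)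
    (0 < σs ∧ 0 < Ns ∧ D σs Ns ≤ D₀) ∧
      (∀ σ N, 0 < σ → 0 < N → D σ N ≤ D₀ → C σs Ns ≤ C σ N) ∧
      (∀ σ N, 0 < σ → 0 < N → D σ N ≤ D₀ → C σ N = C σs Ns → σ = σs ∧ N = Ns) := by
  intro σs Ns
  have hE : 0 < D₀ - Dmin := sub_pos.2 hD₀
  set E := D₀ - Dmin with hE_def
  have hD₀pos : 0 < D₀ := lt_of_le_of_lt hDmin hD₀
  have hαβpos : 0 < α + β := by linarith
  set xs := E * β / (α + β) with hxs_def
  set ys := E * α / (α + β) with hys_def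
  have hxs : 0 < xs := by positivity
  have hys : 0 < ys := by positivity
  have hxsys : xs + ys = E := by
    rw [hxs_def, hys_def]; field_simp; ring
  have hDE : D₀ = Dmin + E := by rw [hE_def]; ring
  have hDxy : Dmin + xs + ys = D₀ := by rw [hDE]; linarith
  have h1a : (0:ℝ) < 1 + α / β := by positivity
  have h1b : (0:ℝ) < 1 + β / α := by positivity
  have hσs : 0 < σs := by
    show 0 < a * ((1 + α / β) / (D₀ - Dmin)) ^ (1 / α)
    have : (0:ℝ) < (1 + α / β) / (D₀ - Dmin) := by positivity
    positivity
  have hNs : 0 < Ns := by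
    show 0 < b * ((1 + β / α) / (D₀ - Dmin)) ^ (1 / β)
    have : (0:ℝ) < (1 + β / α) / (D₀ - Dmin) := by positivity
    positivity
  -- key identities for the optimum point
  have hxs_eq : (a / σs) ^ α = xs := by
    have hbase : (0:ℝ) < (1 + α / β) / E := by positivity
    have hX : (0:ℝ) < ((1 + α / β) / E) ^ (1 / α) := Real.rpow_pos_of_pos hbase _
    have hrs : a / σs = (E / (1 + α / β)) ^ (1 / α) := by
      show a / (a * ((1 + α / β) / (D₀ - Dmin)) ^ (1 / α)) = _
      rw [← hE_def]
      rw [show E / (1 + α / β) = ((1 + α / β) / E)⁻¹ by rw [inv_div]]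
      rw [Real.inv_rpow hbase.le]
      field_simp
    rw [hrs, one_div, Real.rpow_inv_rpow (by positivity) (ne_of_gt hα)]
    rw [hxs_def]
    field_simp
    ring
  have hys_eq : (b / Ns) ^ β = ys := by
    have hbase : (0:ℝ) < (1 + β / α) / E := by positivity
    have hrs : b / Ns = (E / (1 + β / α)) ^ (1 / β) := by
      show b / (b * ((1 + β / α) / (D₀ - Dmin)) ^ (1 / β)) = _
      rw [← hE_def]
      rw [show E / (1 + β / α) = ((1 + β / α) / E)⁻¹ by rw [inv_div]]
      rw [Real.inv_rpow hbase.le]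
      field_simp
    rw [hrs, one_div, Real.rpow_inv_rpow (by positivity) (ne_of_gt hβ)]
    rw [hys_def]
    field_simp
  -- general form of C
  have hCform : ∀ σ N, 0 < σ → 0 < N →
      C σ N = k * a * b * (Dmin + (a / σ) ^ α + (b / N) ^ β) /
        (((a / σ) ^ α) ^ (1/α) * ((b / N) ^ β) ^ (1/β)) := by
    intro σ N hσ hN
    have h1 : ((a / σ) ^ α) ^ (1/α) = a / σ := by
      rw [one_div]; exact Real.rpow_rpow_inv (by positivity) (ne_of_gt hα)
    have h2 : ((b / N) ^ β) ^ (1/β) = b / N := by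
      rw [one_div]; exact Real.rpow_rpow_inv (by positivity) (ne_of_gt hβ)
    rw [hC, hD, h1, h2]
    field_simp
  -- exponents
  have ht0 : (0:ℝ) < 1/α + 1/β := by positivity
  have ht1 : (1:ℝ) < 1/α + 1/β := by
    rcases hαβ with h | h
    · have h1 : (1:ℝ) < 1/α := by rw [lt_div_iff₀ hα]; linarith
      have h2 : (0:ℝ) < 1/β := by positivity
      linarith
    · have h1 : (1:ℝ) < 1/β := by rw [lt_div_iff₀ hβ]; linarith
      have h2 : (0:ℝ) < 1/α := by positivity
      linarith
  set t := 1/α + 1/β with ht_def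
  set p := (1/α) / t with hp_def
  set q := (1/β) / t with hq_def
  have hp : 0 < p := by positivity
  have hq : 0 < q := by positivity
  have hpq : p + q = 1 := by
    rw [hp_def, hq_def, ← add_div, ht_def, div_self (ne_of_gt ht0)]
  have hpt : p * t = 1/α := div_mul_cancel₀ _ (ne_of_gt ht0)
  have hqt : q * t = 1/β := div_mul_cancel₀ _ (ne_of_gt ht0)
  have hxsp : xs = p * E := by
    rw [hxs_def, hp_def, ht_def]
    field_simp
    ring
  have hysq : ys = q * E := by
    rw [hys_def, hq_def, ht_def]
    field_simp
    ring
  have hP : 0 < xs ^ (1/α) * ys ^ (1/β) := by positivity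
  -- core inequality
  have core : ∀ x y : ℝ, 0 < x → 0 < y → Dmin + x + y ≤ D₀ →
      D₀ * (x ^ (1/α) * y ^ (1/β)) ≤ (Dmin + x + y) * (xs ^ (1/α) * ys ^ (1/β)) ∧
      (D₀ * (x ^ (1/α) * y ^ (1/β)) = (Dmin + x + y) * (xs ^ (1/α) * ys ^ (1/β)) →
        x = xs ∧ y = ys) := by
    intro x y hx hy hcon
    have hS : 0 < x + y := by linarith
    have hSE : x + y ≤ E := by rw [hE_def]; linarith
    set r := (x + y) / E with hr_def
    have hr0 : 0 < r := div_pos hS hE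
    have hr1 : r ≤ 1 := (div_le_one hE).2 hSE
    set u := x / xs with hu_def
    set v := y / ys with hv_def
    have hu : 0 < u := div_pos hx hxs
    have hv : 0 < v := div_pos hy hys
    have hsum : p * u + q * v = r := by
      rw [hu_def, hv_def, hxsp, hysq, hr_def]
      field_simp
    have hgm_le : u ^ p * v ^ q ≤ p * u + q * v :=
      Real.geom_mean_le_arith_mean2_weighted hp.le hq.le hu.le hv.le hpq
    have hAB : u ^ (1/α) * v ^ (1/β) = (u ^ p * v ^ q) ^ t := by
      rw [Real.mul_rpow (Real.rpow_nonneg hu.le _) (Real.rpow_nonneg hv.le _),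
        ← Real.rpow_mul hu.le, ← Real.rpow_mul hv.le, hpt, hqt]
    have hstep1 : u ^ (1/α) * v ^ (1/β) ≤ r ^ t := by
      rw [hAB, ← hsum]
      exact Real.rpow_le_rpow (by positivity) hgm_le ht0.le
    have hrt : r ^ t ≤ r := by
      rcases eq_or_lt_of_le hr1 with h | h
      · rw [h, Real.one_rpow]
      · calc r ^ t ≤ r ^ (1:ℝ) := (Real.rpow_lt_rpow_of_exponent_gt hr0 h ht1).le
          _ = r := Real.rpow_one r
    have hstep2 : D₀ * r ^ t ≤ Dmin + x + y := by
      have h1 : D₀ * r ^ t ≤ D₀ * r := mul_le_mul_of_nonneg_left hrt hD₀pos.le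
      have h2 : D₀ * r = Dmin * r + (x + y) := by
        rw [hDE, hr_def]; field_simp
      have h3 : Dmin * r ≤ Dmin := by have h := mul_le_mul_of_nonneg_left hr1 hDmin; simpa using h
      linarith
    have hxy_split : x ^ (1/α) * y ^ (1/β) =
        (u ^ (1/α) * v ^ (1/β)) * (xs ^ (1/α) * ys ^ (1/β)) := by
      rw [hu_def, hv_def, Real.div_rpow hx.le hxs.le, Real.div_rpow hy.le hys.le]
      field_simp
    have main_le : D₀ * (x ^ (1/α) * y ^ (1/β)) ≤
        (Dmin + x + y) * (xs ^ (1/α) * ys ^ (1/β)) := by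
      calc D₀ * (x ^ (1/α) * y ^ (1/β))
          = D₀ * (u ^ (1/α) * v ^ (1/β)) * (xs ^ (1/α) * ys ^ (1/β)) := by
            rw [hxy_split]; ring
        _ ≤ D₀ * r ^ t * (xs ^ (1/α) * ys ^ (1/β)) :=
            mul_le_mul_of_nonneg_right
              (mul_le_mul_of_nonneg_left hstep1 hD₀pos.le) hP.le
        _ ≤ (Dmin + x + y) * (xs ^ (1/α) * ys ^ (1/β)) :=
            mul_le_mul_of_nonneg_right hstep2 hP.le
    refine ⟨main_le, fun heq => ?_⟩
    -- equality case
    have hr_eq : r = 1 := by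
      by_contra hne
      have hlt : r < 1 := lt_of_le_of_ne hr1 hne
      have hrt' : r ^ t < r := by
        calc r ^ t < r ^ (1:ℝ) := Real.rpow_lt_rpow_of_exponent_gt hr0 hlt ht1
          _ = r := Real.rpow_one r
      have hstep2' : D₀ * r ^ t < Dmin + x + y := by
        have h1 : D₀ * r ^ t < D₀ * r := mul_lt_mul_of_pos_left hrt' hD₀pos
        have h2 : D₀ * r = Dmin * r + (x + y) := by
          rw [hDE, hr_def]; field_simp
        have h3 : Dmin * r ≤ Dmin := by have h := mul_le_mul_of_nonneg_left hr1 hDmin; simpa using h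
        linarith
      have : D₀ * (x ^ (1/α) * y ^ (1/β)) <
          (Dmin + x + y) * (xs ^ (1/α) * ys ^ (1/β)) := by
        calc D₀ * (x ^ (1/α) * y ^ (1/β))
            = D₀ * (u ^ (1/α) * v ^ (1/β)) * (xs ^ (1/α) * ys ^ (1/β)) := by
              rw [hxy_split]; ring
          _ ≤ D₀ * r ^ t * (xs ^ (1/α) * ys ^ (1/β)) :=
              mul_le_mul_of_nonneg_right
                (mul_le_mul_of_nonneg_left hstep1 hD₀pos.le) hP.le
          _ < (Dmin + x + y) * (xs ^ (1/α) * ys ^ (1/β)) :=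
              mul_lt_mul_of_pos_right hstep2' hP
      linarith
    have hxyE : x + y = E := by
      rw [hr_def] at hr_eq
      field_simp at hr_eq
      linarith
    have hDsum : Dmin + x + y = D₀ := by rw [hDE]; linarith
    have h4 : x ^ (1/α) * y ^ (1/β) = xs ^ (1/α) * ys ^ (1/β) := by
      rw [hDsum] at heq
      exact mul_left_cancel₀ (ne_of_gt hD₀pos) heq
    have h5 : u ^ (1/α) * v ^ (1/β) = 1 := by
      rw [hxy_split] at h4
      exact mul_right_cancel₀ (ne_of_gt hP) (by rw [h4, one_mul])
    have h6 : u ^ p * v ^ q = 1 := by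
      rw [hAB] at h5
      have hgm_pos : 0 < u ^ p * v ^ q := by positivity
      by_contra hne
      rcases lt_or_gt_of_ne hne with h | h
      · have : (u ^ p * v ^ q) ^ t < (1:ℝ) ^ t :=
          Real.rpow_lt_rpow hgm_pos.le h ht0
        rw [Real.one_rpow] at this; linarith
      · have : (1:ℝ) ^ t < (u ^ p * v ^ q) ^ t :=
          Real.rpow_lt_rpow (by norm_num) h ht0
        rw [Real.one_rpow] at this; linarith
    have hsum1 : p * u + q * v = 1 := by rw [hsum, hr_eq]
    have huv : u = v := by
      by_contra hne
      have := amgm_strict u v p q hu hv hp hq hpq hne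
      linarith
    have hu1 : u = 1 := by
      rw [huv] at hsum1
      have : (p + q) * v = 1 := by linarith [hsum1]; 
      rw [hpq, one_mul] at this
      rw [huv, this]
    have hv1 : v = 1 := by rw [← huv, hu1]
    constructor
    · rw [hu_def] at hu1; exact (div_eq_one_iff_eq (ne_of_gt hxs)).1 hu1
    · rw [hv_def] at hv1; exact (div_eq_one_iff_eq (ne_of_gt hys)).1 hv1
  -- assemble the three parts
  have hD_opt : D σs Ns = D₀ := by
    rw [hD, hxs_eq, hys_eq]; linarith
  have hC_opt : C σs Ns = k * a * b * D₀ / (xs ^ (1/α) * ys ^ (1/β)) := by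
    rw [hCform σs Ns hσs hNs, hxs_eq, hys_eq]
    congr 1
    rw [hDxy]
  refine ⟨⟨hσs, hNs, le_of_eq hD_opt⟩, ?_, ?_⟩
  · intro σ N hσ hN hcon
    set x := (a / σ) ^ α with hx_def
    set y := (b / N) ^ β with hy_def
    have hx : 0 < x := Real.rpow_pos_of_pos (by positivity) _
    have hy : 0 < y := Real.rpow_pos_of_pos (by positivity) _
    have hcon' : Dmin + x + y ≤ D₀ := by rw [hD] at hcon; exact hcon
    have hkey := (core x y hx hy hcon').1
    rw [hC_opt, hCform σ N hσ hN, ← hx_def, ← hy_def]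
    rw [div_le_div_iff₀ hP (by positivity)]
    have h := mul_le_mul_of_nonneg_left hkey (show (0:ℝ) ≤ k * a * b by positivity)
    calc k * a * b * D₀ * (x ^ (1/α) * y ^ (1/β))
        = (k * a * b) * (D₀ * (x ^ (1/α) * y ^ (1/β))) := by ring
      _ ≤ (k * a * b) * ((Dmin + x + y) * (xs ^ (1/α) * ys ^ (1/β))) := h
      _ = k * a * b * (Dmin + x + y) * (xs ^ (1/α) * ys ^ (1/β)) := by ring
  · intro σ N hσ hN hcon heq
    set x := (a / σ) ^ α with hx_def
    set y := (b / N) ^ β with hy_def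
    have hx : 0 < x := Real.rpow_pos_of_pos (by positivity) _
    have hy : 0 < y := Real.rpow_pos_of_pos (by positivity) _
    have hcon' : Dmin + x + y ≤ D₀ := by rw [hD] at hcon; exact hcon
    rw [hC_opt, hCform σ N hσ hN, ← hx_def, ← hy_def] at heq
    have heq' : D₀ * (x ^ (1/α) * y ^ (1/β)) =
        (Dmin + x + y) * (xs ^ (1/α) * ys ^ (1/β)) := by
      rw [div_eq_div_iff (show (0:ℝ) < x ^ (1/α) * y ^ (1/β) by positivity).ne' hP.ne'] at heq
      have hkab : (0:ℝ) < k * a * b := by positivity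
      have h2 : (k * a * b) * (D₀ * (x ^ (1/α) * y ^ (1/β))) =
          (k * a * b) * ((Dmin + x + y) * (xs ^ (1/α) * ys ^ (1/β))) := by
        linear_combination -heq
      exact mul_left_cancel₀ hkab.ne' h2
    obtain ⟨hxx, hyy⟩ := (core x y hx hy hcon').2 heq'
    constructor
    · have h1 : a / σ = a / σs := by
        have e1 : (x : ℝ) ^ (1/α) = a / σ := by
          rw [hx_def, one_div]; exact Real.rpow_rpow_inv (by positivity) (ne_of_gt hα)
        have e2 : (xs : ℝ) ^ (1/α) = a / σs := by
          rw [← hxs_eq, one_div]; exact Real.rpow_rpow_inv (by positivity) (ne_of_gt hα)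
        rw [← e1, ← e2, hxx]
      field_simp at h1
      linarith
    · have h1 : b / N = b / Ns := by
        have e1 : (y : ℝ) ^ (1/β) = b / N := by
          rw [hy_def, one_div]; exact Real.rpow_rpow_inv (by positivity) (ne_of_gt hβ)
        have e2 : (ys : ℝ) ^ (1/β) = b / Ns := by
          rw [← hys_eq, one_div]; exact Real.rpow_rpow_inv (by positivity) (ne_of_gt hβ)
        rw [← e1, ← e2, hyy]
      field_simp at h1
      linarith
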